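/- Let S be a Seidel matrix of order b ≥ 3 whose spectrum is {λ₀ with multiplicity b−c, λ₁ with multiplicity c} for some c ≥ 1, where λ₀ ≠ 1 and λ₁ ≠ 1. Then for every a ≥ 1 the matrix S′ := J_a ⊗ (S − I_b) + I_{ab} is a Seidel matrix of order ab whose spectrum is {a(λ₀−1)+1 with multiplicity b−c, 1 with multiplicity (a−1)b, a(λ₁−1)+1 with multiplicity c}. -/

import Mathlib

open Polynomial

/-- A Seidel matrix: a real symmetric matrix with zero diagonal and all off-diagonal
entries equal to `±1`. -/
def IsSeidel {m : Type*} (S : Matrix m m ℝ) : Prop :=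
  S.IsSymm ∧ (∀ i, S i i = 0) ∧ ∀ i j, i ≠ j → S i j = 1 ∨ S i j = -1

section Aux
open Matrix

variable {n R : Type*} [Fintype n] [DecidableEq n] [CommRing R]

lemma aux_charpoly_conj (P P' B : Matrix n n R) (h : P * P' = 1) :
    (P * B * P').charpoly = B.charpoly := by
  have hC : P.map (C : R →+* R[X]) * P'.map C = 1 := by
    rw [← Matrix.map_mul, h]
    simp
  have key : charmatrix (P * B * P') = P.map (C : R →+* R[X]) * charmatrix B * P'.map C := by
    have hsc : ∀ M : Matrix n n R[X], Matrix.scalar n (X : R[X]) * M = M * Matrix.scalar n X :=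
      fun M => (Matrix.scalar_commute (X : R[X]) (fun r' => Commute.all _ _) M).symm.eq.symm
    have hB : B.charmatrix = Matrix.scalar n (X : R[X]) - B.map C := rfl
    show Matrix.scalar n (X : R[X]) - (C : R →+* R[X]).mapMatrix (P * B * P') = _
    rw [hB]
    simp only [RingHom.mapMatrix_apply, Matrix.map_mul, Matrix.mul_sub, Matrix.sub_mul]
    rw [← hsc (P.map C), Matrix.mul_assoc (Matrix.scalar n (X : R[X])), hC, mul_one]
  rw [Matrix.charpoly, key, Matrix.det_mul, Matrix.det_mul, Matrix.charpoly]
  have : (P.map (C : R →+* R[X])).det * (P'.map C).det = 1 := by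
    rw [← Matrix.det_mul, hC, Matrix.det_one]
  calc (P.map (C : R →+* R[X])).det * (charmatrix B).det * (P'.map C).det
      = (charmatrix B).det * ((P.map (C : R →+* R[X])).det * (P'.map C).det) := by ring
    _ = (charmatrix B).det := by rw [this, mul_one]

lemma aux_charpoly_comp (A : Matrix n n R) (q : R[X]) :
    A.charpoly.comp q = (q • (1 : Matrix n n R[X]) - A.map (C : R →+* R[X])).det := by
  have h1 : A.charpoly.comp q = (Polynomial.eval₂RingHom (C : R →+* R[X]) q) A.charpoly := rfl
  rw [h1, Matrix.charpoly, RingHom.map_det]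
  congr 1
  ext i j
  by_cases h : i = j
  · subst h
    simp [charmatrix_apply_eq, Matrix.one_apply]
  · simp [charmatrix_apply_ne _ _ _ h, Matrix.one_apply_ne h]

lemma aux_charpoly_one : (1 : Matrix n n R).charpoly = (X - C 1) ^ Fintype.card n := by
  have : charmatrix (1 : Matrix n n R) = Matrix.diagonal (fun _ => (X - C 1 : R[X])) := by
    ext i j
    by_cases h : i = j
    · subst h; simp [charmatrix_apply_eq, Matrix.diagonal_apply_eq]
    · simp [charmatrix_apply_ne _ _ _ h, Matrix.one_apply_ne h, Matrix.diagonal_apply_ne _ h]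
  rw [Matrix.charpoly, this, Matrix.det_diagonal, Finset.prod_const, Finset.card_univ]

lemma aux_charmatrix_blockDiagonal {o : Type*} [Fintype o] [DecidableEq o]
    (f : o → Matrix n n R) :
    charmatrix (Matrix.blockDiagonal f) = Matrix.blockDiagonal (fun k => charmatrix (f k)) := by
  ext ⟨i, k⟩ ⟨j, l⟩
  by_cases hkl : k = l
  · subst hkl
    by_cases hij : i = j
    · subst hij
      simp [charmatrix_apply_eq, Matrix.blockDiagonal_apply]
    · have : ((i, k) : n × o) ≠ (j, k) := by simp [hij]
      rw [charmatrix_apply_ne _ _ _ this]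
      simp [Matrix.blockDiagonal_apply, charmatrix_apply_ne _ _ _ hij]
  · have : ((i, k) : n × o) ≠ (j, l) := by simp [hkl]
    rw [charmatrix_apply_ne _ _ _ this]
    simp [Matrix.blockDiagonal_apply, hkl]

lemma aux_charpoly_blockDiagonal {o : Type*} [Fintype o] [DecidableEq o]
    (f : o → Matrix n n R) :
    (Matrix.blockDiagonal f).charpoly = ∏ k, (f k).charpoly := by
  rw [Matrix.charpoly, aux_charmatrix_blockDiagonal, Matrix.det_blockDiagonal]
  rfl

end Aux

/-- Let `S` be a Seidel matrix of order `b ≥ 3` whose spectrum is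
`{lam0 with multiplicity b−c, lam1 with multiplicity c}` for some `c ≥ 1`, with
`lam0 ≠ 1 ≠ lam1`.  Then for every `a ≥ 1` the matrix `S' := J_a ⊗ (S − I_b) + I_{ab}` is a
Seidel matrix of order `ab` whose spectrum is `{a(lam0−1)+1 with multiplicity b−c,
1 with multiplicity (a−1)b, a(lam1−1)+1 with multiplicity c}`. -/
theorem stmt_5 (a b c : ℕ) (ha : 1 ≤ a) (hb : 3 ≤ b) (hc : 1 ≤ c) (hcb : c ≤ b)
    (lam0 lam1 : ℝ) (h0 : lam0 ≠ 1) (h1 : lam1 ≠ 1)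
    (S : Matrix (Fin b) (Fin b) ℝ) (hS : IsSeidel S)
    (hspec : S.charpoly = (X - C lam0) ^ (b - c) * (X - C lam1) ^ c) :
    IsSeidel (Matrix.kroneckerMap (· * ·)
        (Matrix.of fun (_ _ : Fin a) => (1 : ℝ)) (S - 1) + 1) ∧
    (Matrix.kroneckerMap (· * ·)
        (Matrix.of fun (_ _ : Fin a) => (1 : ℝ)) (S - 1) + 1).charpoly =
      (X - C ((a : ℝ) * (lam0 - 1) + 1)) ^ (b - c) * (X - C 1) ^ ((a - 1) * b) *
        (X - C ((a : ℝ) * (lam1 - 1) + 1)) ^ c := by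
  haveI : NeZero a := ⟨by omega⟩
  have hα0 : (a : ℝ) ≠ 0 := Nat.cast_ne_zero.mpr (by omega)
  obtain ⟨hsymm, hdiag, hoff⟩ := hS
  set α : ℝ := (a : ℝ) with hαdef
  set M : Matrix (Fin b) (Fin b) ℝ := S - 1 with hM
  set J : Matrix (Fin a) (Fin a) ℝ := Matrix.of fun _ _ => 1 with hJ
  constructor
  · refine ⟨?_, ?_, ?_⟩
    · show _ = _
      ext ⟨i, j⟩ ⟨k, l⟩
      have hsy : S l j = S j l := hsymm.apply j l
      simp only [Matrix.transpose_apply, Matrix.add_apply, Matrix.kroneckerMap_apply,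
        Matrix.of_apply, Matrix.sub_apply, Matrix.one_apply, hJ, hM, hsy, one_mul]
      by_cases hjl : j = l
      · subst hjl
        by_cases hik : i = k
        · subst hik; rfl
        · simp [hik, Ne.symm hik, Prod.ext_iff]
      · simp [hjl, Ne.symm hjl, Prod.ext_iff]
    · rintro ⟨i, j⟩
      simp [hJ, hM, Matrix.add_apply, Matrix.kroneckerMap_apply, Matrix.sub_apply,
        Matrix.one_apply, hdiag j]
    · rintro ⟨i, j⟩ ⟨k, l⟩ hne
      by_cases hjl : j = l
      · subst hjl
        have hik : i ≠ k := fun h => hne (by rw [h])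
        right
        simp [hJ, hM, Matrix.add_apply, Matrix.kroneckerMap_apply, Matrix.sub_apply,
          Matrix.one_apply, Prod.ext_iff, hik, hdiag j]
      · rcases hoff j l hjl with h | h
        · left
          simp [hJ, hM, Matrix.add_apply, Matrix.kroneckerMap_apply, Matrix.sub_apply,
            Matrix.one_apply, Prod.ext_iff, hjl, h]
        · right
          simp [hJ, hM, Matrix.add_apply, Matrix.kroneckerMap_apply, Matrix.sub_apply,
            Matrix.one_apply, Prod.ext_iff, hjl, h]
  · -- the characteristic polynomial
    set Q : Matrix (Fin a) (Fin a) ℝ :=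
      Matrix.of fun i k => if k = 0 then 1 else if i = 0 then 1 else if i = k then -1 else 0
      with hQdef
    set Q' : Matrix (Fin a) (Fin a) ℝ :=
      Matrix.of fun i k => α⁻¹ - (if i = 0 then 0 else if i = k then 1 else 0) with hQ'def
    set D : Matrix (Fin a) (Fin a) ℝ := Matrix.diagonal (fun k => if k = 0 then α else 0)
      with hDdef
    have colsum : ∀ j, (∑ k, Q k j) = if j = 0 then α else 0 := by
      intro j
      by_cases hj : j = 0
      · subst hj
        simp [hQdef, Finset.sum_const, hαdef]
      · rw [if_neg hj]
        have : ∀ k : Fin a, Q k j = (if k = 0 then (1 : ℝ) else 0) + (if k = j then -1 else 0) := by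
          intro k
          by_cases hk : k = 0
          · subst hk; simp [hQdef, hj, Ne.symm hj]
          · by_cases hkj : k = j <;> simp [hQdef, hj, hk, hkj]
        rw [Finset.sum_congr rfl fun k _ => this k, Finset.sum_add_distrib]
        simp
    have hQQ' : Q * Q' = 1 := by
      ext i j
      rw [Matrix.mul_apply]
      by_cases hi : i = 0
      · subst hi
        have : ∀ k : Fin a, Q 0 k * Q' k j
            = α⁻¹ - (if k = 0 then 0 else if k = j then 1 else 0) := by
          intro k
          by_cases hk : k = 0 <;> simp [hQdef, hQ'def, hk]
        rw [Finset.sum_congr rfl fun k _ => this k, Finset.sum_sub_distrib]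
        by_cases hj : j = 0
        · subst hj
          have hz : (∑ x : Fin a, if x = 0 then (0:ℝ) else if x = 0 then 1 else 0) = 0 :=
            Finset.sum_eq_zero fun x _ => by by_cases hx : x = 0 <;> simp [hx]
          simp [hz, Finset.sum_const, hαdef, Matrix.one_apply, mul_inv_cancel₀ hα0]
        · have hsum2 : (∑ k : Fin a, (if k = 0 then (0:ℝ) else if k = j then 1 else 0)) = 1 := by
            have : ∀ k : Fin a, (if k = 0 then (0:ℝ) else if k = j then 1 else 0)
                = if k = j then 1 else 0 := by
              intro k
              by_cases hk : k = 0
              · subst hk; simp [Ne.symm hj]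
              · simp [hk]
            rw [Finset.sum_congr rfl fun k _ => this k]
            simp
          rw [hsum2]
          simp [Finset.sum_const, hαdef, Matrix.one_apply, Ne.symm hj, mul_inv_cancel₀ hα0]
      · have : ∀ k : Fin a, Q i k * Q' k j
            = (if k = 0 then Q' 0 j else 0) - (if k = i then Q' i j else 0) := by
          intro k
          by_cases hk : k = 0
          · subst hk
            simp [hQdef, hi, Ne.symm hi]
          · by_cases hki : k = i
            · subst hki; simp [hQdef, hk, hi]
            · simp [hQdef, hk, hi, hki, Ne.symm hki, fun h : i = k => hki h.symm]
        rw [Finset.sum_congr rfl fun k _ => this k, Finset.sum_sub_distrib]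
        simp only [Finset.sum_ite_eq', Finset.mem_univ, if_true]
        by_cases hj : j = i
        · subst hj; simp [hQ'def, hi, Matrix.one_apply]
        · by_cases hj0 : j = 0 <;>
            simp [hQ'def, hi, hj0, Matrix.one_apply, Ne.symm hj, fun h : i = j => hj h.symm]
    have hQ'Q : Q' * Q = 1 := by
      ext i j
      rw [Matrix.mul_apply]
      have : ∀ k : Fin a, Q' i k * Q k j
          = α⁻¹ * Q k j - (if i = 0 then 0 else if k = i then Q i j else 0) := by
        intro k
        by_cases hi : i = 0
        · simp [hQ'def, hi, sub_mul]
        · by_cases hki : k = i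
          · subst hki; simp [hQ'def, hi, sub_mul]
          · have hik : ¬ i = k := fun h => hki h.symm
            simp [hQ'def, hi, hki, hik, sub_mul]
      rw [Finset.sum_congr rfl fun k _ => this k, Finset.sum_sub_distrib, ← Finset.mul_sum,
        colsum]
      by_cases hi : i = 0
      · subst hi
        by_cases hj : j = 0
        · subst hj; simp [Matrix.one_apply, inv_mul_cancel₀ hα0]
        · simp [hj, Matrix.one_apply, Ne.symm hj]
      · simp only [if_neg hi, Finset.sum_ite_eq', Finset.mem_univ, if_true]
        by_cases hj : j = 0
        · subst hj; simp [hQdef, hi, Matrix.one_apply, inv_mul_cancel₀ hα0, hi]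
        · by_cases hij : i = j
          · subst hij; simp [hQdef, hi, hj, Matrix.one_apply]
          · have hji : ¬ j = i := fun h => hij h.symm
            simp [hQdef, hi, hj, hij, hji, Matrix.one_apply]
    have hJQ : J * Q = Q * D := by
      ext i j
      rw [Matrix.mul_apply, Matrix.mul_diagonal]
      have : ∀ k : Fin a, J i k * Q k j = Q k j := by intro k; simp [hJ]
      rw [Finset.sum_congr rfl fun k _ => this k, colsum]
      by_cases hj : j = 0
      · subst hj; simp [hQdef, mul_comm]
      · simp [hj]
    have hJ_eq : J = Q * D * Q' := by
      calc J = J * (Q * Q') := by rw [hQQ', mul_one]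
        _ = (J * Q) * Q' := (mul_assoc _ _ _).symm
        _ = Q * D * Q' := by rw [hJQ]
    have hPP' : (Matrix.kroneckerMap (· * ·) Q (1 : Matrix (Fin b) (Fin b) ℝ)) *
        (Matrix.kroneckerMap (· * ·) Q' 1) = 1 := by
      rw [← Matrix.mul_kronecker_mul, hQQ', mul_one, Matrix.one_kronecker_one]
    have hconj : Matrix.kroneckerMap (· * ·) J M + 1 =
        (Matrix.kroneckerMap (· * ·) Q (1 : Matrix (Fin b) (Fin b) ℝ)) *
          (Matrix.kroneckerMap (· * ·) D M + 1) *
          (Matrix.kroneckerMap (· * ·) Q' 1) := by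
      rw [Matrix.mul_add, mul_one, Matrix.add_mul, ← Matrix.mul_kronecker_mul,
        ← Matrix.mul_kronecker_mul, hPP', one_mul, mul_one, hJ_eq]
    have h2 : (Matrix.kroneckerMap (· * ·) J M + 1).charpoly =
        (Matrix.kroneckerMap (· * ·) D M + 1).charpoly := by
      rw [hconj]
      exact aux_charpoly_conj _ _ _ hPP'
    set f : Fin a → Matrix (Fin b) (Fin b) ℝ := fun k => if k = 0 then α • M + 1 else 1
      with hf
    have hreindex : Matrix.kroneckerMap (· * ·) D M + 1 =
        Matrix.reindex (Equiv.prodComm (Fin b) (Fin a)) (Equiv.prodComm (Fin b) (Fin a))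
          (Matrix.blockDiagonal f) := by
      ext ⟨i, j⟩ ⟨k, l⟩
      simp only [Matrix.add_apply, Matrix.kroneckerMap_apply, Matrix.reindex_apply,
        Matrix.submatrix_apply, Equiv.prodComm_symm, Equiv.prodComm_apply, Prod.swap,
        Matrix.blockDiagonal_apply, hf]
      by_cases hik : i = k
      · subst hik
        by_cases hi0 : i = 0
        · subst hi0
          simp [hDdef, Matrix.one_apply, Prod.ext_iff, hαdef]
        · simp [hDdef, hi0, Matrix.one_apply, Prod.ext_iff]
      · simp [hDdef, Matrix.diagonal_apply_ne _ hik, Matrix.one_apply, Prod.ext_iff, hik]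
    have h3 : (Matrix.kroneckerMap (· * ·) D M + 1).charpoly =
        (Matrix.blockDiagonal f).charpoly := by
      rw [hreindex, Matrix.charpoly_reindex]
    have h4 : (Matrix.blockDiagonal f).charpoly =
        (α • M + 1).charpoly * ((X - C 1) ^ b) ^ (a - 1) := by
      rw [aux_charpoly_blockDiagonal,
        ← Finset.mul_prod_erase Finset.univ _ (Finset.mem_univ (0 : Fin a))]
      have hcongr : ∀ k ∈ Finset.univ.erase (0 : Fin a),
          (f k).charpoly = (X - C 1) ^ b := by
        intro k hk
        have hk0 : k ≠ 0 := (Finset.mem_erase.mp hk).1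
        simp only [hf, if_neg hk0]
        rw [aux_charpoly_one, Fintype.card_fin]
      rw [Finset.prod_congr rfl hcongr, Finset.prod_const,
        Finset.card_erase_of_mem (Finset.mem_univ _), Finset.card_univ, Fintype.card_fin]
      have hf0 : f 0 = α • M + 1 := by simp [hf]
      rw [hf0]
    have h5 : (α • M + 1).charpoly =
        (X - C (α * (lam0 - 1) + 1)) ^ (b - c) * (X - C (α * (lam1 - 1) + 1)) ^ c := by
      have hA : α • M + 1 = α • S + (1 - α) • (1 : Matrix (Fin b) (Fin b) ℝ) := by
        rw [hM, smul_sub, sub_smul, one_smul]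
        abel
      set q : ℝ[X] := C α⁻¹ * (X - C (1 - α)) with hq
      have hCinv : (C α : ℝ[X]) * C α⁻¹ = 1 := by
        rw [← C_mul, mul_inv_cancel₀ hα0, C_1]
      have hchm : Matrix.charmatrix (α • S + (1 - α) • 1) =
          (C α : ℝ[X]) • (q • (1 : Matrix (Fin b) (Fin b) ℝ[X]) - S.map C) := by
        refine Matrix.ext fun i j => ?_
        by_cases hij : i = j
        · subst hij
          rw [Matrix.charmatrix_apply_eq]
          simp only [Matrix.smul_apply, Matrix.sub_apply, Matrix.one_apply_eq,
            Matrix.add_apply, Matrix.map_apply, hq, smul_eq_mul, mul_one, map_add, map_mul,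
            map_sub, map_one]
          linear_combination (1 - C α - X : ℝ[X]) * hCinv
        · rw [Matrix.charmatrix_apply_ne _ _ _ hij]
          simp [Matrix.smul_apply, Matrix.sub_apply, Matrix.one_apply_ne hij,
            Matrix.add_apply, Matrix.map_apply, smul_eq_mul, mul_zero, smul_zero,
            zero_sub, map_add, map_mul, map_sub, map_one, C_mul]
      rw [hA, Matrix.charpoly, hchm, Matrix.det_smul, ← aux_charpoly_comp,
        hspec, Fintype.card_fin, mul_comp, pow_comp, pow_comp, sub_comp, sub_comp, X_comp,
        C_comp, C_comp]
      have hroot : ∀ lam : ℝ, q - C lam = C α⁻¹ * (X - C (α * (lam - 1) + 1)) := by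
        intro lam
        rw [hq]
        simp only [map_add, map_mul, map_sub, map_one]
        linear_combination (C lam : ℝ[X]) * hCinv
      rw [hroot lam0, hroot lam1, mul_pow, mul_pow]
      have hb' : (b - c) + c = b := Nat.sub_add_cancel hcb
      have hone : (C α : ℝ[X]) ^ b * (C α⁻¹ ^ (b - c) * C α⁻¹ ^ c) = 1 := by
        rw [← pow_add, hb', ← mul_pow, hCinv, one_pow]
      linear_combination ((X - C (α * (lam0 - 1) + 1)) ^ (b - c) *
        (X - C (α * (lam1 - 1) + 1)) ^ c) * hone
    rw [h2, h3, h4, h5, ← pow_mul, mul_comm b (a - 1)]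
    ring
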